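/- Let k be a field and K, L division rings which are finite-dimensional k-algebras with dim_k L = 2 · dim_k K. Let γ : K → L be an injective homomorphism of k-algebras and suppose c ∈ Z(L) with c ∉ γ(Z(K)). Then c ∉ γ(K), every element of L can be written uniquely as γ(x) + γ(y)c with x, y ∈ K, and Z(L) = γ(Z(K)) ∔ γ(Z(K))c, i.e. an element γ(x) + γ(y)c (x, y ∈ K) lies in Z(L) if and only if x, y ∈ Z(K). -/

import Mathlib

/-- If `K, L` are division rings, finite-dimensional over a field `k`, with
`dim_k L = 2 · dim_k K`, `γ : K → L` is an injective `k`-algebra homomorphism, and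
`c ∈ Z(L)` with `c ∉ γ(Z(K))`, then `c ∉ γ(K)`, every element of `L` is uniquely of the
form `γ(x) + γ(y)·c`, and `γ(x) + γ(y)·c ∈ Z(L)` iff `x, y ∈ Z(K)`. -/
theorem center_decomposition_of_degree_two_embedding
    (k K L : Type*) [Field k]
    [DivisionRing K] [Algebra k K] [FiniteDimensional k K]
    [DivisionRing L] [Algebra k L] [FiniteDimensional k L]
    (hdim : Module.finrank k L = 2 * Module.finrank k K)
    (γ : K →ₐ[k] L) (hγ : Function.Injective γ)
    (c : L) (hc : c ∈ Subring.center L) (hc' : c ∉ ⇑γ '' (Subring.center K : Set K)) :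
    c ∉ Set.range ⇑γ ∧
    (∀ d : L, ∃! p : K × K, d = γ p.1 + γ p.2 * c) ∧
    (∀ x y : K, γ x + γ y * c ∈ Subring.center L ↔
      x ∈ Subring.center K ∧ y ∈ Subring.center K) := by
  have hc0 := Subring.mem_center_iff.mp hc
  -- Claim 1: c ∉ range γ
  have h1 : c ∉ Set.range ⇑γ := by
    rintro ⟨a, rfl⟩
    refine hc' ⟨a, Subring.mem_center_iff.mpr (fun x => hγ ?_), rfl⟩
    rw [map_mul, map_mul]
    exact hc0 (γ x)
  -- linear independence in explicit form
  have hind : ∀ s t : K, γ s + γ t * c = 0 → s = 0 ∧ t = 0 := by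
    intro s t h
    by_cases ht : t = 0
    · subst ht
      rw [map_zero, zero_mul, add_zero] at h
      exact ⟨hγ (by rw [h, map_zero]), rfl⟩
    · exfalso
      have hγt : γ t ≠ 0 := fun hh => ht (hγ (by rw [hh, map_zero]))
      have h2 : γ t * c = γ (-s) := by
        rw [map_neg]
        rw [add_comm] at h
        exact eq_neg_of_add_eq_zero_left h
      have : c = γ (t⁻¹ * (-s)) := by
        rw [map_mul, map_inv₀, ← h2, ← mul_assoc, inv_mul_cancel₀ hγt, one_mul]
      exact h1 ⟨_, this.symm⟩
  -- K-module structure on L via γ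
  letI : Module K L := Module.compHom L γ.toRingHom
  have hsmul : ∀ (s : K) (d : L), s • d = γ s * d := fun _ _ => rfl
  haveI : IsScalarTower k K L := ⟨fun a x d => by
    show γ (a • x) * d = a • (γ x * d)
    rw [map_smul, Algebra.smul_def, Algebra.smul_def, mul_assoc]⟩
  haveI : FiniteDimensional K L := FiniteDimensional.right k K L
  have hf2 : Module.finrank K L = 2 := by
    have hmul := Module.finrank_mul_finrank k K L
    rw [hdim] at hmul
    have hpos : 0 < Module.finrank k K := Module.finrank_pos
    exact Nat.eq_of_mul_eq_mul_left hpos (hmul.trans (mul_comm 2 _))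
  have hli : LinearIndependent K ![(1:L), c] := by
    rw [LinearIndependent.pair_iff]
    intro s t h
    exact hind s t (by simpa [hsmul] using h)
  let b : Module.Basis (Fin 2) K L := basisOfLinearIndependentOfCardEqFinrank hli (by simp [hf2])
  have hb : ∀ d : L, ∃ p : K × K, d = γ p.1 + γ p.2 * c := by
    intro d
    have hs := b.sum_repr d
    refine ⟨(b.repr d 0, b.repr d 1), ?_⟩
    rw [Fin.sum_univ_two] at hs
    have hb0 : b 0 = 1 := by
      simp [b, coe_basisOfLinearIndependentOfCardEqFinrank]
    have hb1 : b 1 = c := by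
      simp [b, coe_basisOfLinearIndependentOfCardEqFinrank]
    rw [hb0, hb1, hsmul, hsmul, mul_one] at hs
    exact hs.symm
  have huniq : ∀ x y x' y' : K, γ x + γ y * c = γ x' + γ y' * c → x = x' ∧ y = y' := by
    intro x y x' y' h
    have h0 : γ (x - x') + γ (y - y') * c = 0 := by
      rw [map_sub, map_sub, sub_mul, sub_add_sub_comm, h, sub_self]
    obtain ⟨hx, hy⟩ := hind _ _ h0
    exact ⟨sub_eq_zero.mp hx, sub_eq_zero.mp hy⟩
  -- γ maps Z(K) into Z(L)
  have hZ : ∀ z : K, z ∈ Subring.center K → γ z ∈ Subring.center L := by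
    intro z hz
    have hz' := Subring.mem_center_iff.mp hz
    rw [Subring.mem_center_iff]
    intro d
    obtain ⟨⟨a, b'⟩, hd⟩ := hb d
    rw [hd, add_mul, mul_add, mul_assoc, ← hc0 (γ z), ← mul_assoc, ← mul_assoc,
      ← map_mul, ← map_mul, ← map_mul, ← map_mul, hz' a, hz' b']
  refine ⟨h1, ?_, ?_⟩
  · intro d
    obtain ⟨p, hp⟩ := hb d
    refine ⟨p, hp, ?_⟩
    rintro ⟨x, y⟩ hq
    obtain ⟨h1', h2'⟩ := huniq x y p.1 p.2 (hq.symm.trans hp)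
    simp [h1', h2']
  · intro x y
    constructor
    · intro h
      have hcomm : ∀ a : K, a * x = x * a ∧ a * y = y * a := by
        intro a
        have := Subring.mem_center_iff.mp h (γ a)
        -- γ a * (γ x + γ y * c) = (γ x + γ y * c) * γ a
        rw [mul_add, add_mul, ← mul_assoc, ← map_mul, ← map_mul,
          mul_assoc (γ y) c (γ a), ← hc0 (γ a), ← mul_assoc, ← map_mul, ← map_mul] at this
        exact huniq _ _ _ _ this
      exact ⟨Subring.mem_center_iff.mpr (fun a => (hcomm a).1),
        Subring.mem_center_iff.mpr (fun a => (hcomm a).2)⟩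
    · rintro ⟨hx, hy⟩
      exact Subring.add_mem _ (hZ x hx) (Subring.mul_mem _ (hZ y hy) hc)
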